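/- (Explicit bound on γ_{N,S}, inequality (12)) Suppose λ ∈ (0,1), and define χ := 1 − λ_min(P)/φ_∞ ∈ (0,1) and ψ := λ_max(Kᵀ Q K + Āᵀ P Ā)/λ_min(P). Then α_M ≤ ψ·χ^M for every integer M ≥ 0, and for all integers S ≥ 1 and N ≥ S + 1, γ_{N,S} ≤ χ·(1 + α_{N−S−1})^{S+2} ≤ χ·(1 + ψ·χ^{N−S−1})^{S+2}. -/

import Mathlib

open Matrix Finset Filter Topology

/-- The smallest eigenvalue of a (symmetric) real matrix. -/
noncomputable def lamMin {n : ℕ} (R : Matrix (Fin n) (Fin n) ℝ) : ℝ :=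
  if h : R.IsHermitian then ⨅ i, h.eigenvalues i else 0

/-- The largest eigenvalue of a (symmetric) real matrix. -/
noncomputable def lamMax {n : ℕ} (R : Matrix (Fin n) (Fin n) ℝ) : ℝ :=
  if h : R.IsHermitian then ⨆ i, h.eigenvalues i else 0

/-- The quadratic form `xᵀ R x`. -/
noncomputable def qf {p : ℕ} (R : Matrix (Fin p) (Fin p) ℝ) (x : Fin p → ℝ) : ℝ :=
  x ⬝ᵥ R.mulVec x

/-- λ := 1 − λ_min(Q̄)/λ_max(P̄). -/
noncomputable def lamParam {n : ℕ} (Qb Pb : Matrix (Fin n) (Fin n) ℝ) : ℝ :=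
  1 - lamMin Qb / lamMax Pb

/-- φ_N := (λ_max(P̄)·λ_max(P + KᵀQK)/λ_min(P̄))·(1 − λ^{N+1})/(1 − λ). -/
noncomputable def phi {n m : ℕ} (Qb Pb P : Matrix (Fin n) (Fin n) ℝ)
    (Q : Matrix (Fin m) (Fin m) ℝ) (K : Matrix (Fin m) (Fin n) ℝ) (N : ℕ) : ℝ :=
  (lamMax Pb * lamMax (P + Kᵀ * Q * K) / lamMin Pb) *
    ((1 - lamParam Qb Pb ^ (N + 1)) / (1 - lamParam Qb Pb))

/-- φ_∞ := λ_max(P̄)·λ_max(P + KᵀQK)/(λ_min(P̄)·(1 − λ)). -/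
noncomputable def phiInf {n m : ℕ} (Qb Pb P : Matrix (Fin n) (Fin n) ℝ)
    (Q : Matrix (Fin m) (Fin m) ℝ) (K : Matrix (Fin m) (Fin n) ℝ) : ℝ :=
  lamMax Pb * lamMax (P + Kᵀ * Q * K) / (lamMin Pb * (1 - lamParam Qb Pb))

/-- ψ := λ_max(KᵀQK + ĀᵀPĀ)/λ_min(P). -/
noncomputable def psiC {n m : ℕ} (P Abar : Matrix (Fin n) (Fin n) ℝ)
    (Q : Matrix (Fin m) (Fin m) ℝ) (K : Matrix (Fin m) (Fin n) ℝ) : ℝ :=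
  lamMax (Kᵀ * Q * K + Abarᵀ * P * Abar) / lamMin P

/-- χ := 1 − λ_min(P)/φ_∞. -/
noncomputable def chiC {n m : ℕ} (Qb Pb P : Matrix (Fin n) (Fin n) ℝ)
    (Q : Matrix (Fin m) (Fin m) ℝ) (K : Matrix (Fin m) (Fin n) ℝ) : ℝ :=
  1 - lamMin P / phiInf Qb Pb P Q K

/-- α_N := (λ_max(KᵀQK + ĀᵀPĀ)/λ_min(P))·∏_{κ=0}^{N−1}(1 − λ_min(P)/φ_{κ+1}). -/
noncomputable def alphaC {n m : ℕ} (Qb Pb P Abar : Matrix (Fin n) (Fin n) ℝ)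
    (Q : Matrix (Fin m) (Fin m) ℝ) (K : Matrix (Fin m) (Fin n) ℝ) (N : ℕ) : ℝ :=
  psiC P Abar Q K * ∏ κ ∈ Finset.range N, (1 - lamMin P / phi Qb Pb P Q K (κ + 1))

/-- γ_{N,S} := (1 − λ_min(P)/φ_∞)·max{1 + α_{N−S−1}, (1 + α_{N−1})·∏_{ℓ=N−S}^{N−1}(1 + α_ℓ)}. -/
noncomputable def gammaNS {n m : ℕ} (Qb Pb P Abar : Matrix (Fin n) (Fin n) ℝ)
    (Q : Matrix (Fin m) (Fin m) ℝ) (K : Matrix (Fin m) (Fin n) ℝ) (N S : ℕ) : ℝ :=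
  (1 - lamMin P / phiInf Qb Pb P Q K) *
    max (1 + alphaC Qb Pb P Abar Q K (N - S - 1))
      ((1 + alphaC Qb Pb P Abar Q K (N - 1)) *
        ∏ ℓ ∈ Finset.Ico (N - S) N, (1 + alphaC Qb Pb P Abar Q K ℓ))

/-- The trajectory of `x(τ+1) = A x(τ) + B u(τ)` from `x0` under the control sequence `u`. -/
def traj {n m : ℕ} (A : Matrix (Fin n) (Fin n) ℝ) (B : Matrix (Fin n) (Fin m) ℝ)
    (x0 : Fin n → ℝ) (u : ℕ → Fin m → ℝ) : ℕ → Fin n → ℝ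
  | 0 => x0
  | τ + 1 => A *ᵥ traj A B x0 u τ + B *ᵥ u τ

/-- Feasibility of a control sequence `u(0),…,u(N−1)` for the `N`-QP at `x`. -/
def Feasible {n m : ℕ} (A : Matrix (Fin n) (Fin n) ℝ) (B : Matrix (Fin n) (Fin m) ℝ)
    (X0 : Set (Fin n → ℝ)) (U : Set (Fin m → ℝ)) (N : ℕ) (x : Fin n → ℝ)
    (u : ℕ → Fin m → ℝ) : Prop :=
  (∀ τ < N, u τ ∈ U) ∧ (∀ τ < N, traj A B x u (τ + 1) ∈ X0)

/-- The cost `Σ_{τ=0}^{N−1}(x(τ)ᵀPx(τ) + u(τ)ᵀQu(τ)) + x(N)ᵀPx(N)` of the `N`-QP. -/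
noncomputable def cost {n m : ℕ} (A : Matrix (Fin n) (Fin n) ℝ) (B : Matrix (Fin n) (Fin m) ℝ)
    (P : Matrix (Fin n) (Fin n) ℝ) (Q : Matrix (Fin m) (Fin m) ℝ) (N : ℕ)
    (x : Fin n → ℝ) (u : ℕ → Fin m → ℝ) : ℝ :=
  (∑ τ ∈ Finset.range N, (qf P (traj A B x u τ) + qf Q (u τ))) + qf P (traj A B x u N)

/-- `V_N(x)`: the optimal value of the `N`-QP at `x`. -/
noncomputable def Vopt {n m : ℕ} (A : Matrix (Fin n) (Fin n) ℝ) (B : Matrix (Fin n) (Fin m) ℝ)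
    (P : Matrix (Fin n) (Fin n) ℝ) (Q : Matrix (Fin m) (Fin m) ℝ)
    (X0 : Set (Fin n → ℝ)) (U : Set (Fin m → ℝ)) (N : ℕ) (x : Fin n → ℝ) : ℝ :=
  sInf (cost A B P Q N x '' {u | Feasible A B X0 U N x u})

lemma lamMin_le {k : ℕ} {R : Matrix (Fin k) (Fin k) ℝ} (h : R.IsHermitian) (i : Fin k) :
    lamMin R ≤ h.eigenvalues i := by
  rw [lamMin, dif_pos h]
  exact ciInf_le (Set.Finite.bddBelow (Set.finite_range _)) i

lemma le_lamMax {k : ℕ} {R : Matrix (Fin k) (Fin k) ℝ} (h : R.IsHermitian) (i : Fin k) :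
    h.eigenvalues i ≤ lamMax R := by
  rw [lamMax, dif_pos h]
  exact le_ciSup (Set.Finite.bddAbove (Set.finite_range _)) i

lemma lamMin_pos {k : ℕ} (hk : 0 < k) {R : Matrix (Fin k) (Fin k) ℝ} (hR : R.PosDef) :
    0 < lamMin R := by
  haveI : Nonempty (Fin k) := Fin.pos_iff_nonempty.mp hk
  rw [lamMin, dif_pos hR.isHermitian]
  obtain ⟨i, hi⟩ := exists_eq_ciInf_of_finite (f := hR.isHermitian.eigenvalues)
  rw [← hi]
  exact hR.eigenvalues_pos i

lemma lamMax_nonneg {k : ℕ} (hk : 0 < k) {R : Matrix (Fin k) (Fin k) ℝ} (hR : R.PosSemidef) :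
    0 ≤ lamMax R := by
  haveI : Nonempty (Fin k) := Fin.pos_iff_nonempty.mp hk
  exact le_trans (hR.eigenvalues_nonneg (Classical.arbitrary _)) (le_lamMax hR.1 _)

lemma lamMax_pos {k : ℕ} (hk : 0 < k) {R : Matrix (Fin k) (Fin k) ℝ} (hR : R.PosDef) :
    0 < lamMax R := by
  haveI : Nonempty (Fin k) := Fin.pos_iff_nonempty.mp hk
  exact lt_of_lt_of_le (hR.eigenvalues_pos (Classical.arbitrary _)) (le_lamMax hR.isHermitian _)

lemma sum_eigenvalues_eq_trace {k : ℕ} {R : Matrix (Fin k) (Fin k) ℝ} (h : R.IsHermitian) :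
    ∑ i, h.eigenvalues i = R.trace := by
  rw [h.trace_eq_sum_eigenvalues]
  simp

lemma lamMin_le_lamMax_add {k : ℕ} (hk : 0 < k) {A B : Matrix (Fin k) (Fin k) ℝ}
    (hA : A.PosDef) (hB : B.PosSemidef) : lamMin A ≤ lamMax (A + B) := by
  haveI : Nonempty (Fin k) := Fin.pos_iff_nonempty.mp hk
  have hAB : (A + B).PosDef := hA.add_posSemidef hB
  have h1 : (k : ℝ) * lamMin A ≤ ∑ i, hA.isHermitian.eigenvalues i := by
    have := Finset.card_nsmul_le_sum (Finset.univ : Finset (Fin k))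
      hA.isHermitian.eigenvalues (lamMin A) (fun i _ => lamMin_le hA.isHermitian i)
    simpa [nsmul_eq_mul] using this
  have h2 : ∑ i, hAB.isHermitian.eigenvalues i ≤ (k : ℝ) * lamMax (A + B) := by
    have := Finset.sum_le_card_nsmul (Finset.univ : Finset (Fin k))
      hAB.isHermitian.eigenvalues (lamMax (A + B)) (fun i _ => le_lamMax hAB.isHermitian i)
    simpa [nsmul_eq_mul] using this
  have hBtr : 0 ≤ B.trace := by
    rw [← sum_eigenvalues_eq_trace hB.1]
    exact Finset.sum_nonneg fun i _ => hB.eigenvalues_nonneg i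
  have h3 : A.trace ≤ (A + B).trace := by rw [trace_add]; linarith
  rw [sum_eigenvalues_eq_trace] at h1 h2
  have hk' : (0 : ℝ) < k := by exact_mod_cast hk
  nlinarith

/-- Explicit bound on γ_{N,S}, inequality (12): with `λ ∈ (0,1)` and
`χ := 1 − λ_min(P)/φ_∞ ∈ (0,1)`, `ψ := λ_max(KᵀQK + ĀᵀPĀ)/λ_min(P)`, one has
`α_M ≤ ψ·χ^M` for every `M ≥ 0`, and for all `S ≥ 1`, `N ≥ S + 1`,
`γ_{N,S} ≤ χ·(1 + α_{N−S−1})^{S+2} ≤ χ·(1 + ψ·χ^{N−S−1})^{S+2}`. -/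
theorem stmt16 {n m : ℕ} (hn : 0 < n)
    (Qb Pb P Abar : Matrix (Fin n) (Fin n) ℝ)
    (Q : Matrix (Fin m) (Fin m) ℝ) (K : Matrix (Fin m) (Fin n) ℝ)
    (hQb : Qb.PosDef) (hPb : Pb.PosDef) (hP : P.PosDef) (hQ : Q.PosDef)
    (hlam0 : 0 < lamParam Qb Pb) (hlam1 : lamParam Qb Pb < 1)
    (hchi0 : 0 < chiC Qb Pb P Q K) (hchi1 : chiC Qb Pb P Q K < 1) :
    (∀ M : ℕ, alphaC Qb Pb P Abar Q K M ≤ psiC P Abar Q K * chiC Qb Pb P Q K ^ M) ∧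
    ∀ S N : ℕ, 1 ≤ S → S + 1 ≤ N →
      gammaNS Qb Pb P Abar Q K N S
          ≤ chiC Qb Pb P Q K * (1 + alphaC Qb Pb P Abar Q K (N - S - 1)) ^ (S + 2) ∧
        chiC Qb Pb P Q K * (1 + alphaC Qb Pb P Abar Q K (N - S - 1)) ^ (S + 2)
          ≤ chiC Qb Pb P Q K *
              (1 + psiC P Abar Q K * chiC Qb Pb P Q K ^ (N - S - 1)) ^ (S + 2) := by
  haveI : Nonempty (Fin n) := Fin.pos_iff_nonempty.mp hn
  set lam := lamParam Qb Pb with hlamdef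
  -- PSD facts
  have hKQK : (Kᵀ * Q * K).PosSemidef := by
    have := hQ.posSemidef.conjTranspose_mul_mul_same K
    rwa [conjTranspose_eq_transpose_of_trivial] at this
  have hAPA : (Abarᵀ * P * Abar).PosSemidef := by
    have := hP.posSemidef.conjTranspose_mul_mul_same Abar
    rwa [conjTranspose_eq_transpose_of_trivial] at this
  have hPKQK : (P + Kᵀ * Q * K).PosDef := hP.add_posSemidef hKQK
  -- scalar abbreviations
  have hb : 0 < lamMin Pb := lamMin_pos hn hPb
  have ha : 0 < lamMax Pb := lamMax_pos hn hPb
  have hab : lamMin Pb ≤ lamMax Pb :=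
    le_trans (lamMin_le hPb.isHermitian (Classical.arbitrary _))
      (le_lamMax hPb.isHermitian (Classical.arbitrary _))
  have hc : 0 < lamMax (P + Kᵀ * Q * K) := lamMax_pos hn hPKQK
  have hp : 0 < lamMin P := lamMin_pos hn hP
  have hpc : lamMin P ≤ lamMax (P + Kᵀ * Q * K) := lamMin_le_lamMax_add hn hP hKQK
  have hpsi : 0 ≤ psiC P Abar Q K :=
    div_nonneg (lamMax_nonneg hn (hKQK.add hAPA)) hp.le
  -- phi bounds
  have hphi_ge : ∀ κ : ℕ, lamMax (P + Kᵀ * Q * K) ≤ phi Qb Pb P Q K (κ + 1) := by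
    intro κ
    have hr : (1 : ℝ) ≤ (1 - lam ^ (κ + 1 + 1)) / (1 - lam) := by
      rw [le_div_iff₀ (by linarith)]
      have : lam ^ (κ + 1 + 1) ≤ lam := pow_le_of_le_one hlam0.le hlam1.le (by omega)
      linarith
    have hfac : lamMax (P + Kᵀ * Q * K) ≤
        lamMax Pb * lamMax (P + Kᵀ * Q * K) / lamMin Pb := by
      rw [le_div_iff₀ hb]
      nlinarith
    calc lamMax (P + Kᵀ * Q * K)
        ≤ lamMax Pb * lamMax (P + Kᵀ * Q * K) / lamMin Pb := hfac
      _ = (lamMax Pb * lamMax (P + Kᵀ * Q * K) / lamMin Pb) * 1 := by ring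
      _ ≤ phi Qb Pb P Q K (κ + 1) := by
          unfold phi
          exact mul_le_mul_of_nonneg_left hr (by positivity)
  have hphi_pos : ∀ κ : ℕ, 0 < phi Qb Pb P Q K (κ + 1) :=
    fun κ => lt_of_lt_of_le hc (hphi_ge κ)
  have hphiInf_eq : phiInf Qb Pb P Q K =
      (lamMax Pb * lamMax (P + Kᵀ * Q * K) / lamMin Pb) * (1 / (1 - lam)) := by
    unfold phiInf
    field_simp
    rw [hlamdef]
  have hphi_le : ∀ κ : ℕ, phi Qb Pb P Q K κ ≤ phiInf Qb Pb P Q K := by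
    intro κ
    rw [hphiInf_eq]
    unfold phi
    apply mul_le_mul_of_nonneg_left _ (by positivity)
    have hpow : 0 < lam ^ (κ + 1) := pow_pos hlam0 _
    exact (div_le_div_iff_of_pos_right (by linarith)).mpr (by linarith)
  -- factor bounds
  have hfact0 : ∀ κ : ℕ, 0 ≤ 1 - lamMin P / phi Qb Pb P Q K (κ + 1) := by
    intro κ
    have : lamMin P / phi Qb Pb P Q K (κ + 1) ≤ 1 :=
      (div_le_one (hphi_pos κ)).mpr (hpc.trans (hphi_ge κ))
    linarith
  have hfactchi : ∀ κ : ℕ,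
      1 - lamMin P / phi Qb Pb P Q K (κ + 1) ≤ chiC Qb Pb P Q K := by
    intro κ
    unfold chiC
    have : lamMin P / phiInf Qb Pb P Q K ≤ lamMin P / phi Qb Pb P Q K (κ + 1) := by
      gcongr
      · exact hphi_pos κ
      · exact hphi_le (κ + 1)
    linarith
  -- part 1
  have part1 : ∀ M : ℕ, alphaC Qb Pb P Abar Q K M ≤ psiC P Abar Q K * chiC Qb Pb P Q K ^ M := by
    intro M
    unfold alphaC
    apply mul_le_mul_of_nonneg_left _ hpsi
    calc ∏ κ ∈ Finset.range M, (1 - lamMin P / phi Qb Pb P Q K (κ + 1))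
        ≤ ∏ κ ∈ Finset.range M, chiC Qb Pb P Q K :=
          Finset.prod_le_prod (fun κ _ => hfact0 κ) (fun κ _ => hfactchi κ)
      _ = chiC Qb Pb P Q K ^ M := by rw [Finset.prod_const, Finset.card_range]
  have halpha_nonneg : ∀ M : ℕ, 0 ≤ alphaC Qb Pb P Abar Q K M := by
    intro M
    exact mul_nonneg hpsi (Finset.prod_nonneg fun κ _ => hfact0 κ)
  have hmono : ∀ a b : ℕ, a ≤ b →
      alphaC Qb Pb P Abar Q K b ≤ alphaC Qb Pb P Abar Q K a := by
    intro a b hab2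
    unfold alphaC
    rw [← Finset.prod_range_mul_prod_Ico _ hab2, ← mul_assoc]
    have h1 : ∏ κ ∈ Finset.Ico a b, (1 - lamMin P / phi Qb Pb P Q K (κ + 1)) ≤ 1 :=
      Finset.prod_le_one (fun κ _ => hfact0 κ)
        (fun κ _ => (hfactchi κ).trans hchi1.le)
    have h2 : 0 ≤ psiC P Abar Q K * ∏ κ ∈ Finset.range a,
        (1 - lamMin P / phi Qb Pb P Q K (κ + 1)) :=
      mul_nonneg hpsi (Finset.prod_nonneg fun κ _ => hfact0 κ)
    nlinarith
  refine ⟨part1, fun S N hS hSN => ?_⟩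
  set A0 := alphaC Qb Pb P Abar Q K (N - S - 1) with hA0
  have hA0nn : 0 ≤ A0 := halpha_nonneg _
  constructor
  · -- gamma bound
    unfold gammaNS
    rw [show (1 - lamMin P / phiInf Qb Pb P Q K) = chiC Qb Pb P Q K from rfl]
    apply mul_le_mul_of_nonneg_left _ hchi0.le
    apply max_le
    · exact le_self_pow₀ (by linarith) (by omega)
    · have hcard : (Finset.Ico (N - S) N).card = S := by
        rw [Nat.card_Ico]; omega
      have hprod : ∏ ℓ ∈ Finset.Ico (N - S) N, (1 + alphaC Qb Pb P Abar Q K ℓ)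
          ≤ (1 + A0) ^ S := by
        calc ∏ ℓ ∈ Finset.Ico (N - S) N, (1 + alphaC Qb Pb P Abar Q K ℓ)
            ≤ ∏ _ℓ ∈ Finset.Ico (N - S) N, (1 + A0) := by
              apply Finset.prod_le_prod
              · intro ℓ _; have := halpha_nonneg ℓ; linarith
              · intro ℓ hℓ
                have hmem := Finset.mem_Ico.mp hℓ
                have : alphaC Qb Pb P Abar Q K ℓ ≤ A0 := hmono _ _ (by omega)
                linarith
          _ = (1 + A0) ^ S := by rw [Finset.prod_const, hcard]
      have h1 : 1 + alphaC Qb Pb P Abar Q K (N - 1) ≤ 1 + A0 := by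
        have : alphaC Qb Pb P Abar Q K (N - 1) ≤ A0 := hmono _ _ (by omega)
        linarith
      calc (1 + alphaC Qb Pb P Abar Q K (N - 1)) *
            ∏ ℓ ∈ Finset.Ico (N - S) N, (1 + alphaC Qb Pb P Abar Q K ℓ)
          ≤ (1 + A0) * (1 + A0) ^ S := by
            apply mul_le_mul h1 hprod ?_ (by linarith)
            exact Finset.prod_nonneg fun ℓ _ => by have := halpha_nonneg ℓ; linarith
        _ = (1 + A0) ^ (S + 1) := by ring
        _ ≤ (1 + A0) ^ (S + 2) := by
            apply pow_le_pow_right₀ (by linarith) (by omega)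
  · apply mul_le_mul_of_nonneg_left _ hchi0.le
    apply pow_le_pow_left₀ (by linarith)
    have := part1 (N - S - 1)
    linarith
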